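/- For a fixed formal power series c, the map d ↦ c ⧢ d is an ultrametric contraction on (ℝ⟨⟨X⟩⟩, dist) if c is proper (i.e., its constant term (c,∅) = 0 and c ≠ 0), and an isometry if c is not proper. -/
import Mathlib

/-- Shuffle product of formal power series (words to `ℝ`), via the left-quotient recursion. -/
noncomputable def shuffle {X : Type*} : (List X → ℝ) → (List X → ℝ) → List X → ℝ
  | c, d, [] => c [] * d []
  | c, d, x :: w => shuffle (fun u => c (x :: u)) d w + shuffle c (fun u => d (x :: u)) w

/-- Order of a series: minimal word length in the support, `⊤` for the zero series. -/
noncomputable def ord {X : Type*} (c : List X → ℝ) : ℕ∞ :=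
  sInf {n : ℕ∞ | ∃ w, c w ≠ 0 ∧ (w.length : ℕ∞) = n}

/-- `σ` raised to an extended-natural power, with `σ^⊤ = 0`. -/
noncomputable def upow (σ : ℝ) (n : ℕ∞) : ℝ :=
  if n = ⊤ then 0 else σ ^ n.toNat

/-- The ultrametric distance `dist(c,d) = σ^(ord (c-d))`. -/
noncomputable def udist {X : Type*} (σ : ℝ) (c d : List X → ℝ) : ℝ :=
  upow σ (ord (c - d))

section aux
variable {X : Type*}

lemma ord_le' {c : List X → ℝ} {w : List X} (h : c w ≠ 0) : ord c ≤ (w.length : ℕ∞) :=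
  sInf_le ⟨w, h, rfl⟩

lemma le_ord' {c : List X → ℝ} {n : ℕ∞} (h : ∀ w, c w ≠ 0 → n ≤ (w.length : ℕ∞)) :
    n ≤ ord c := by
  apply le_sInf
  rintro m ⟨w, hw, rfl⟩
  exact h w hw

lemma eq_zero_of_lt_ord' {c : List X → ℝ} {w : List X} (h : (w.length : ℕ∞) < ord c) :
    c w = 0 := by
  by_contra hw
  exact absurd (ord_le' hw) (not_le.2 h)

lemma ord_spec' {c : List X → ℝ} (h : c ≠ 0) :
    ∃ w : List X, c w ≠ 0 ∧ (w.length : ℕ∞) = ord c := by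
  classical
  have h0 : ∃ w : List X, c w ≠ 0 := by
    by_contra hh
    push_neg at hh
    exact h (funext fun w => hh w)
  obtain ⟨w0, hw0⟩ := h0
  have hP : ∃ n : ℕ, ∃ w : List X, c w ≠ 0 ∧ w.length = n := ⟨w0.length, w0, hw0, rfl⟩
  obtain ⟨w, hw, hlen⟩ := Nat.find_spec hP
  refine ⟨w, hw, le_antisymm ?_ (ord_le' hw)⟩
  apply le_ord'
  intro v hv
  rw [hlen, Nat.cast_le]
  by_contra hlt
  exact Nat.find_min hP (not_le.1 hlt) ⟨v, hv, rfl⟩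

lemma shuffle_sub (c d₁ d₂ : List X → ℝ) (w : List X) :
    shuffle c (d₁ - d₂) w = shuffle c d₁ w - shuffle c d₂ w := by
  induction w generalizing c d₁ d₂ with
  | nil => simp [shuffle]; ring
  | cons x w ih =>
      have h2 : (fun u => (d₁ - d₂) (x :: u)) =
          (fun u => d₁ (x :: u)) - (fun u => d₂ (x :: u)) := by
        funext u; simp
      simp only [shuffle, h2, ih]
      ring

lemma shuffle_vanish (w : List X) (a b : ℕ) (c e : List X → ℝ)
    (hc : ∀ u : List X, u.length < a → c u = 0)
    (he : ∀ u : List X, u.length < b → e u = 0)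
    (hw : w.length < a + b) : shuffle c e w = 0 := by
  induction w generalizing a b c e with
  | nil =>
      simp only [shuffle]
      rcases Nat.eq_zero_or_pos a with ha | ha
      · have : e [] = 0 := he [] (by simp at hw ⊢; omega)
        rw [this, mul_zero]
      · rw [hc [] (by simpa using ha), zero_mul]
  | cons x w ih =>
      simp only [shuffle]
      have hlen : w.length + 1 < a + b := by simpa using hw
      have h1 : shuffle (fun u => c (x :: u)) e w = 0 :=
        ih (a - 1) b _ _ (fun u hu => hc (x :: u) (by simp; omega)) he (by omega)
      have h2 : shuffle c (fun u => e (x :: u)) w = 0 :=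
        ih a (b - 1) _ _ hc (fun u hu => he (x :: u) (by simp; omega)) (by omega)
      rw [h1, h2, add_zero]

lemma shuffle_head (w : List X) (c e : List X → ℝ)
    (he : ∀ u : List X, u.length < w.length → e u = 0) :
    shuffle c e w = c [] * e w := by
  induction w generalizing c e with
  | nil => simp [shuffle]
  | cons x w ih =>
      simp only [shuffle]
      have h1 : shuffle (fun u => c (x :: u)) e w = c [x] * e w :=
        ih _ _ (fun u hu => he u (by simp; omega))
      have hw0 : e w = 0 := he w (by simp)
      have h2 : shuffle c (fun u => e (x :: u)) w = c [] * e (x :: w) :=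
        ih _ _ (fun u hu => he (x :: u) (by simp; omega))
      rw [h1, hw0, mul_zero, zero_add, h2]

lemma ord_shuffle_ge (c e : List X → ℝ) : ord e ≤ ord (shuffle c e) := by
  apply le_ord'
  intro w hw
  by_contra hlt
  rw [not_le] at hlt
  refine hw (shuffle_vanish w 0 (w.length + 1) c e (by omega) ?_ (by omega))
  intro u hu
  apply eq_zero_of_lt_ord'
  calc (u.length : ℕ∞) ≤ (w.length : ℕ∞) := by exact_mod_cast Nat.lt_succ_iff.1 hu
    _ < ord e := hlt

lemma ord_shuffle_le (c e : List X → ℝ) (hc : c [] ≠ 0) :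
    ord (shuffle c e) ≤ ord e := by
  rcases eq_or_ne e 0 with rfl | he
  · have : ord (0 : List X → ℝ) = ⊤ := by
      apply le_antisymm le_top
      apply le_ord'
      intro w hw
      simp at hw
    rw [this]
    exact le_top
  · obtain ⟨w, hw, hlen⟩ := ord_spec' he
    have hmin : ∀ u : List X, u.length < w.length → e u = 0 := by
      intro u hu
      apply eq_zero_of_lt_ord'
      rw [← hlen]
      exact_mod_cast hu
    have : shuffle c e w = c [] * e w := shuffle_head w c e hmin
    have hne : shuffle c e w ≠ 0 := by
      rw [this]; exact mul_ne_zero hc hw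
    calc ord (shuffle c e) ≤ (w.length : ℕ∞) := ord_le' hne
      _ = ord e := hlen

lemma ord_shuffle_proper (c e : List X → ℝ) (hc : c [] = 0) :
    1 + ord e ≤ ord (shuffle c e) := by
  apply le_ord'
  intro w hw
  by_contra hlt
  rw [not_le] at hlt
  have hord : (w.length : ℕ∞) ≤ ord e := by
    rcases eq_or_ne (ord e) ⊤ with h | h
    · rw [h]; exact le_top
    · lift ord e to ℕ using h with n hn
      rw [Nat.cast_le]
      have : (w.length : ℕ∞) < ((1 + n : ℕ) : ℕ∞) := by
        rwa [Nat.cast_add, Nat.cast_one]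
      rw [Nat.cast_lt] at this
      omega
  refine hw (shuffle_vanish w 1 w.length c e ?_ ?_ (by omega))
  · intro u hu
    have : u = [] := List.length_eq_zero_iff.1 (by omega)
    rwa [this]
  · intro u hu
    apply eq_zero_of_lt_ord'
    calc (u.length : ℕ∞) < (w.length : ℕ∞) := by exact_mod_cast hu
      _ ≤ ord e := hord

lemma upow_nonneg {σ : ℝ} (hσ0 : 0 < σ) (n : ℕ∞) : 0 ≤ upow σ n := by
  unfold upow
  split
  · exact le_rfl
  · exact pow_nonneg hσ0.le _

lemma upow_anti {σ : ℝ} (hσ0 : 0 < σ) (hσ1 : σ < 1) {m n : ℕ∞} (h : m ≤ n) :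
    upow σ n ≤ upow σ m := by
  rcases eq_or_ne n ⊤ with rfl | hn
  · rw [show upow σ ⊤ = 0 from if_pos rfl]
    exact upow_nonneg hσ0 m
  · have hm : m ≠ ⊤ := fun hm => hn (top_le_iff.1 (hm ▸ h))
    rw [upow, upow, if_neg hn, if_neg hm]
    exact pow_le_pow_of_le_one hσ0.le hσ1.le (ENat.toNat_le_toNat h hn)

lemma upow_one_add {σ : ℝ} (n : ℕ∞) : upow σ (1 + n) = σ * upow σ n := by
  rcases eq_or_ne n ⊤ with rfl | hn
  · simp [upow]
  · lift n to ℕ using hn with k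
    rw [show (1 : ℕ∞) + k = ((k + 1 : ℕ) : ℕ∞) by push_cast; ring]
    rw [upow, upow, if_neg (ENat.coe_ne_top _), if_neg (ENat.coe_ne_top _)]
    simp only [ENat.toNat_coe]
    rw [pow_succ]
    ring

end aux

/-- Shuffling with a fixed series `c` is a contraction if `c` is proper and an isometry otherwise. -/
theorem shuffle_contraction_or_isometry {X : Type*} [Fintype X] (σ : ℝ)
    (hσ0 : 0 < σ) (hσ1 : σ < 1) (c : List X → ℝ) :
    ((c [] = 0 ∧ c ≠ 0) →
        ∀ d₁ d₂ : List X → ℝ,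
          udist σ (shuffle c d₁) (shuffle c d₂) ≤ σ * udist σ d₁ d₂) ∧
    (c [] ≠ 0 →
        ∀ d₁ d₂ : List X → ℝ,
          udist σ (shuffle c d₁) (shuffle c d₂) = udist σ d₁ d₂) := by
  have key : ∀ d₁ d₂ : List X → ℝ,
      udist σ (shuffle c d₁) (shuffle c d₂) = upow σ (ord (shuffle c (d₁ - d₂))) := by
    intro d₁ d₂
    have : shuffle c d₁ - shuffle c d₂ = shuffle c (d₁ - d₂) := by
      funext w
      rw [Pi.sub_apply, shuffle_sub]
    rw [udist, this]
  constructor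
  · rintro ⟨hc0, -⟩ d₁ d₂
    rw [key, udist]
    calc upow σ (ord (shuffle c (d₁ - d₂))) ≤ upow σ (1 + ord (d₁ - d₂)) :=
          upow_anti hσ0 hσ1 (ord_shuffle_proper c _ hc0)
      _ = σ * upow σ (ord (d₁ - d₂)) := upow_one_add _
  · intro hc0 d₁ d₂
    rw [key, udist]
    congr 1
    exact le_antisymm (ord_shuffle_le c _ hc0) (ord_shuffle_ge c _)
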